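/- The second derivative of R(t) = f(t)²/2 satisfies R''(t) ≤ √(δ/(8π)) · e^{-2(δ-1/2)/t} · t^{-3/2} for all t > 0; in particular R'' is bounded on (0,∞) by a constant depending only on δ. -/

import Mathlib

open Real Set MeasureTheory

/-- standard normal density -/
noncomputable def stdPDF (x : ℝ) : ℝ := Real.exp (-x ^ 2 / 2) / Real.sqrt (2 * Real.pi)

/-- The objective F(τ; t, δ). -/
noncomputable def Fobj (δ t τ : ℝ) : ℝ :=
  τ / 2 * (δ - 1 / 2) + t / (2 * τ)
    + τ / 2 * ∫ x in Set.Ioi (2 / τ), (x - 2 / τ) ^ 2 * stdPDF x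



noncomputable def Qfun (a : ℝ) : ℝ := ∫ x in Set.Ioi a, stdPDF x

lemma stdPDF_pos (x : ℝ) : 0 < stdPDF x := by
  unfold stdPDF
  positivity

lemma stdPDF_eq (x : ℝ) : stdPDF x = Real.exp (-(1/2) * x ^ 2) / Real.sqrt (2 * Real.pi) := by
  unfold stdPDF; ring_nf

lemma continuous_stdPDF : Continuous stdPDF := by
  unfold stdPDF
  fun_prop

lemma integrable_stdPDF : Integrable stdPDF := by
  have h := (integrable_exp_neg_mul_sq (by norm_num : (0:ℝ) < 1/2)).div_const (Real.sqrt (2 * Real.pi))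
  refine h.congr ?_
  filter_upwards with x
  rw [stdPDF_eq]

lemma integrable_mul_stdPDF : Integrable (fun x => x * stdPDF x) := by
  have h := (integrable_mul_exp_neg_mul_sq (by norm_num : (0:ℝ) < 1/2)).div_const (Real.sqrt (2 * Real.pi))
  refine h.congr ?_
  filter_upwards with x
  rw [stdPDF_eq]; ring

lemma integrable_sq_mul_stdPDF : Integrable (fun x => x ^ 2 * stdPDF x) := by
  have h := ((integrable_rpow_mul_exp_neg_mul_sq (by norm_num : (0:ℝ) < 1/2)
    (by norm_num : (-1:ℝ) < 2)).div_const (Real.sqrt (2 * Real.pi)))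
  refine h.congr ?_
  filter_upwards with x
  rw [stdPDF_eq]
  rw [show ((2:ℝ)) = ((2:ℕ):ℝ) by norm_num, Real.rpow_natCast]
  ring

lemma hasDerivAt_stdPDF (x : ℝ) : HasDerivAt stdPDF (-x * stdPDF x) x := by
  have h1 : HasDerivAt (fun y : ℝ => -y ^ 2 / 2) (-x) x := by
    have := ((hasDerivAt_pow 2 x).neg).div_const 2
    exact this.congr_deriv (by norm_num; ring)
  have h2 := (h1.exp).div_const (Real.sqrt (2 * Real.pi))
  refine HasDerivAt.congr_deriv (h2.congr_of_eventuallyEq ?_) ?_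
  · filter_upwards with y; rw [stdPDF]
  · rw [stdPDF]; ring

lemma tendsto_stdPDF_atTop : Filter.Tendsto stdPDF Filter.atTop (nhds 0) := by
  have h0 : Filter.Tendsto (fun x : ℝ => x ^ 2) Filter.atTop Filter.atTop :=
    Filter.tendsto_pow_atTop two_ne_zero
  have h1 : Filter.Tendsto (fun x : ℝ => -x ^ 2 / 2) Filter.atTop Filter.atBot := by
    apply Filter.Tendsto.atBot_div_const (by norm_num)
    exact Filter.tendsto_neg_atTop_atBot.comp h0
  have h2 := (Real.tendsto_exp_atBot.comp h1).div_const (Real.sqrt (2 * Real.pi))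
  have h3 : Filter.Tendsto (fun x : ℝ => Real.exp (-x ^ 2 / 2) / Real.sqrt (2 * Real.pi))
      Filter.atTop (nhds 0) := by simpa using h2
  exact h3.congr (fun x => by rw [stdPDF])

lemma tendsto_mul_stdPDF_atTop : Filter.Tendsto (fun x => x * stdPDF x) Filter.atTop (nhds 0) := by
  have h := rpow_mul_exp_neg_mul_sq_isLittleO_exp_neg (by norm_num : (0:ℝ) < 1/2) 1
  have he : Filter.Tendsto (fun x : ℝ => Real.exp (-(1/2) * x)) Filter.atTop (nhds 0) := by
    apply Real.tendsto_exp_atBot.comp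
    have := Filter.Tendsto.const_mul_atTop_of_neg (l := Filter.atTop)
      (by norm_num : (-(1:ℝ)/2) < 0) (Filter.tendsto_id (α := ℝ))
    refine this.congr (fun x => ?_)
    simp [id]; ring
  have h2 : Filter.Tendsto (fun x : ℝ => x ^ (1:ℝ) * Real.exp (-(1/2) * x ^ 2))
      Filter.atTop (nhds 0) :=
    h.isBigO.trans_tendsto he
  have h3 := h2.div_const (Real.sqrt (2 * Real.pi))
  have h4 : Filter.Tendsto (fun x : ℝ => x ^ (1:ℝ) * Real.exp (-(1/2) * x ^ 2) / Real.sqrt (2 * Real.pi))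
      Filter.atTop (nhds 0) := by simpa using h3
  exact h4.congr (fun x => by rw [Real.rpow_one, stdPDF_eq]; ring)

/-- first moment tail -/
lemma integral_mul_stdPDF_Ioi (a : ℝ) : ∫ x in Set.Ioi a, x * stdPDF x = stdPDF a := by
  have h := integral_Ioi_of_hasDerivAt_of_tendsto
    (f := fun x => -stdPDF x) (f' := fun x => x * stdPDF x) (a := a) (m := 0)
    (continuous_stdPDF.neg.continuousWithinAt)
    (fun x _ => by have h := (hasDerivAt_stdPDF x).neg; simp at h; exact h)
    (integrable_mul_stdPDF.integrableOn)
    (by simpa using tendsto_stdPDF_atTop.neg)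
  simpa using h

/-- second moment tail -/
lemma integral_sq_mul_stdPDF_Ioi (a : ℝ) :
    ∫ x in Set.Ioi a, x ^ 2 * stdPDF x = a * stdPDF a + Qfun a := by
  have hd : ∀ x ∈ Set.Ioi a, HasDerivAt (fun y => -(y * stdPDF y))
      (x ^ 2 * stdPDF x - stdPDF x) x := by
    intro x _
    have h0 := ((hasDerivAt_id x).mul (hasDerivAt_stdPDF x)).neg
    refine h0.congr_deriv ?_
    simp only [id]; ring
  have hint : IntegrableOn (fun x => x ^ 2 * stdPDF x - stdPDF x) (Set.Ioi a) :=
    (integrable_sq_mul_stdPDF.sub integrable_stdPDF).integrableOn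
  have htd : Filter.Tendsto (fun x => -(x * stdPDF x)) Filter.atTop (nhds 0) := by
    simpa using tendsto_mul_stdPDF_atTop.neg
  have h := integral_Ioi_of_hasDerivAt_of_tendsto
    ((continuous_id.mul continuous_stdPDF).neg.continuousWithinAt) hd hint htd
  have hsub : ∫ x in Set.Ioi a, (x ^ 2 * stdPDF x - stdPDF x)
      = (∫ x in Set.Ioi a, x ^ 2 * stdPDF x) - Qfun a := by
    rw [integral_sub integrable_sq_mul_stdPDF.integrableOn integrable_stdPDF.integrableOn]
    rfl
  rw [hsub] at h
  simp only [zero_sub, neg_neg, id, Pi.neg_apply, Pi.mul_apply] at h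
  linarith [h]

lemma Qfun_pos (a : ℝ) : 0 < Qfun a := by
  rw [Qfun]
  apply (setIntegral_pos_iff_support_of_nonneg_ae ?_ integrable_stdPDF.integrableOn).2
  · have : (Function.support stdPDF) = Set.univ := by
      ext x; simp [Function.mem_support, (stdPDF_pos x).ne']
    rw [this]
    simpa using (by simp : (Set.Ioi a) ∩ Set.univ = Set.Ioi a) ▸ measure_Ioi_pos (volume) a
  · filter_upwards with x using (stdPDF_pos x).le

lemma Qfun_nonneg (a : ℝ) : 0 ≤ Qfun a := (Qfun_pos a).le

lemma Qfun_split {x y : ℝ} (h : x ≤ y) :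
    Qfun x = (∫ t in Set.Ioc x y, stdPDF t) + Qfun y := by
  rw [Qfun, Qfun, ← Set.Ioc_union_Ioi_eq_Ioi h]
  rw [setIntegral_union ?_ measurableSet_Ioi integrable_stdPDF.integrableOn
    integrable_stdPDF.integrableOn]
  exact Set.Ioc_disjoint_Ioi le_rfl

lemma Qfun_eq (x : ℝ) : Qfun x = Qfun 0 - ∫ t in (0:ℝ)..x, stdPDF t := by
  rcases le_or_gt 0 x with h | h
  · rw [intervalIntegral.integral_of_le h, Qfun_split h]
    rw [MeasureTheory.integral_Ioc_eq_integral_Ioo]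
    rw [show ∫ t in Set.Ioo 0 x, stdPDF t = ∫ t in Set.Ioc 0 x, stdPDF t from
      (MeasureTheory.integral_Ioc_eq_integral_Ioo).symm]
    ring
  · rw [intervalIntegral.integral_of_ge h.le, Qfun_split h.le]
    ring

lemma hasDerivAt_Qfun (a : ℝ) : HasDerivAt Qfun (-(stdPDF a)) a := by
  have h : HasDerivAt (fun x => ∫ t in (0:ℝ)..x, stdPDF t) (stdPDF a) a := by
    apply intervalIntegral.integral_hasDerivAt_right
      (continuous_stdPDF.intervalIntegrable 0 a)
      (continuous_stdPDF.stronglyMeasurableAtFilter _ _)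
      continuous_stdPDF.continuousAt
  have h2 := (h.const_sub (Qfun 0))
  refine h2.congr_of_eventuallyEq ?_
  filter_upwards with x
  rw [Qfun_eq]

lemma Qfun_zero : Qfun 0 = 1 / 2 := by
  have h := integral_gaussian_Ioi (1/2)
  have : Qfun 0 = (∫ x in Set.Ioi (0:ℝ), Real.exp (-(1/2) * x ^ 2)) / Real.sqrt (2 * Real.pi) := by
    rw [Qfun, ← integral_div]
    congr 1; ext x; rw [stdPDF]; ring_nf
  rw [this, h, show Real.pi / (1/2) = 2 * Real.pi by ring]
  have hs : Real.sqrt (2 * Real.pi) ≠ 0 := by positivity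
  field_simp

/-- a * Q a ≤ φ a for a ≥ 0 -/
lemma mul_Qfun_le (a : ℝ) (ha : 0 ≤ a) : a * Qfun a ≤ stdPDF a := by
  rw [← integral_mul_stdPDF_Ioi a, Qfun, ← integral_const_mul]
  apply setIntegral_mono_on (integrable_stdPDF.integrableOn.const_mul a)
    integrable_mul_stdPDF.integrableOn measurableSet_Ioi
  intro x hx
  exact mul_le_mul_of_nonneg_right (le_of_lt hx) (stdPDF_pos x).le

noncomputable def Jfun (a : ℝ) : ℝ := (1 + a ^ 2) * Qfun a - a * stdPDF a
noncomputable def psi (a : ℝ) : ℝ := (1 - a ^ 2) * Qfun a + a * stdPDF a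

lemma integral_sub_sq_stdPDF (a : ℝ) :
    ∫ x in Set.Ioi a, (x - a) ^ 2 * stdPDF x = Jfun a := by
  have h : ∀ x : ℝ, (x - a) ^ 2 * stdPDF x
      = x ^ 2 * stdPDF x - (2 * a) * (x * stdPDF x) + a ^ 2 * stdPDF x := by
    intro x; ring
  rw [setIntegral_congr_fun measurableSet_Ioi (fun x _ => h x)]
  have hA : IntegrableOn (fun x : ℝ => x ^ 2 * stdPDF x - 2 * a * (x * stdPDF x)) (Set.Ioi a) := by
    exact (integrable_sq_mul_stdPDF.sub (integrable_mul_stdPDF.const_mul (2*a))).integrableOn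
  have hB : IntegrableOn (fun x : ℝ => a ^ 2 * stdPDF x) (Set.Ioi a) :=
    (integrable_stdPDF.const_mul (a^2)).integrableOn
  rw [integral_add hA hB,
      integral_sub integrable_sq_mul_stdPDF.integrableOn
        (integrable_mul_stdPDF.integrableOn.const_mul (2*a)),
      integral_const_mul, integral_const_mul, integral_mul_stdPDF_Ioi,
      integral_sq_mul_stdPDF_Ioi]
  rw [Jfun, Qfun]
  ring

lemma Fobj_eq (δ t τ : ℝ) :
    Fobj δ t τ = τ / 2 * (δ - 1 / 2) + t / (2 * τ) + τ / 2 * Jfun (2 / τ) := by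
  rw [Fobj, integral_sub_sq_stdPDF]

lemma hasDerivAt_Jfun (a : ℝ) :
    HasDerivAt Jfun (2 * a * Qfun a - 2 * stdPDF a) a := by
  have h1 : HasDerivAt (fun x : ℝ => (1 + x ^ 2) * Qfun x)
      (2 * a * Qfun a + (1 + a ^ 2) * -(stdPDF a)) a := by
    have := (((hasDerivAt_pow 2 a).const_add 1)).mul (hasDerivAt_Qfun a)
    refine this.congr_deriv ?_; norm_num
  have h2 : HasDerivAt (fun x : ℝ => x * stdPDF x)
      (stdPDF a + a * (-a * stdPDF a)) a := by
    exact ((hasDerivAt_id a).mul (hasDerivAt_stdPDF a)).congr_deriv (by simp only [id]; ring)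
  have := h1.sub h2
  refine this.congr_deriv ?_
  ring

lemma hasDerivAt_psi (a : ℝ) : HasDerivAt psi (-(2 * a * Qfun a)) a := by
  have h1 : HasDerivAt (fun x : ℝ => (1 - x ^ 2) * Qfun x)
      (-(2 * a) * Qfun a + (1 - a ^ 2) * -(stdPDF a)) a := by
    have := (((hasDerivAt_pow 2 a).const_sub 1)).mul (hasDerivAt_Qfun a)
    refine this.congr_deriv ?_; norm_num
  have h2 : HasDerivAt (fun x : ℝ => x * stdPDF x)
      (stdPDF a + a * (-a * stdPDF a)) a := by
    exact ((hasDerivAt_id a).mul (hasDerivAt_stdPDF a)).congr_deriv (by simp only [id]; ring)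
  have := h1.add h2
  refine this.congr_deriv ?_
  ring

lemma psi_ge_Qfun (a : ℝ) (ha : 0 ≤ a) : Qfun a ≤ psi a := by
  have h := mul_Qfun_le a ha
  have : a ^ 2 * Qfun a ≤ a * stdPDF a := by
    have := mul_le_mul_of_nonneg_left h ha
    calc a ^ 2 * Qfun a = a * (a * Qfun a) := by ring
    _ ≤ a * stdPDF a := this
  rw [psi]; nlinarith
lemma psi_pos (a : ℝ) (ha : 0 ≤ a) : 0 < psi a := lt_of_lt_of_le (Qfun_pos a) (psi_ge_Qfun a ha)

lemma psi_le_half (a : ℝ) (ha : 0 ≤ a) : psi a ≤ 1 / 2 := by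
  have hanti : AntitoneOn psi (Set.Ici 0) := by
    apply antitoneOn_of_deriv_nonpos (convex_Ici 0)
    · exact (Differentiable.continuous
        (fun x => (hasDerivAt_psi x).differentiableAt)).continuousOn
    · intro x hx
      exact (hasDerivAt_psi x).differentiableAt.differentiableWithinAt
    · intro x hx
      rw [(hasDerivAt_psi x).deriv]
      simp only [interior_Ici, Set.mem_Ioi] at hx
      have := Qfun_pos x
      nlinarith
  have := hanti (Set.self_mem_Ici) (by exact ha) ha
  simpa [psi, Qfun_zero] using this

lemma hasDerivAt_Fobj_tau (δ t τ : ℝ) (hτ : 0 < τ) :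
    HasDerivAt (fun s => Fobj δ t s)
      ((δ - 1 / 2) / 2 - t / (2 * τ ^ 2) + psi (2 / τ) / 2) τ := by
  have hτ' : τ ≠ 0 := hτ.ne'
  have h1 : HasDerivAt (fun s : ℝ => s / 2 * (δ - 1 / 2)) ((δ - 1 / 2) / 2) τ := by
    have := ((hasDerivAt_id τ).div_const 2).mul_const (δ - 1 / 2)
    refine this.congr_deriv ?_; ring
  have h2 : HasDerivAt (fun s : ℝ => t / (2 * s)) (-(t / 2) / τ ^ 2) τ := by
    have := (hasDerivAt_inv hτ').const_mul (t / 2)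
    refine (this.congr_of_eventuallyEq ?_).congr_deriv ?_
    · filter_upwards with y; ring
    · field_simp
  have h3 : HasDerivAt (fun s : ℝ => 2 / s) (-2 / τ ^ 2) τ := by
    have := (hasDerivAt_inv hτ').const_mul 2
    refine (this.congr_of_eventuallyEq ?_).congr_deriv ?_
    · filter_upwards with y; ring
    · field_simp
  have h4 : HasDerivAt (fun s : ℝ => Jfun (2 / s))
      ((2 * (2 / τ) * Qfun (2 / τ) - 2 * stdPDF (2 / τ)) * (-2 / τ ^ 2)) τ :=
    (hasDerivAt_Jfun (2 / τ)).comp τ h3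
  have h5 : HasDerivAt (fun s : ℝ => s / 2 * Jfun (2 / s))
      (1 / 2 * Jfun (2 / τ) + τ / 2 *
        ((2 * (2 / τ) * Qfun (2 / τ) - 2 * stdPDF (2 / τ)) * (-2 / τ ^ 2))) τ := by
    have := ((hasDerivAt_id τ).div_const 2).mul h4
    refine this.congr_deriv ?_; simp only [id]
  have htot := (h1.add h2).add h5
  have heq : ∀ s : ℝ, Fobj δ t s
      = s / 2 * (δ - 1 / 2) + t / (2 * s) + s / 2 * Jfun (2 / s) := fun s => Fobj_eq δ t s
  refine (htot.congr_of_eventuallyEq (by filter_upwards with s; rw [heq]; rfl)).congr_deriv ?_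
  rw [Jfun, psi]
  field_simp
  try ring

noncomputable def Tfun (δ a : ℝ) : ℝ := (4 * (δ - 1 / 2) + 4 * psi a) / a ^ 2

lemma Tfun_pos {δ : ℝ} (hδ : 1 / 2 < δ) {a : ℝ} (ha : 0 < a) : 0 < Tfun δ a := by
  rw [Tfun]
  have h1 := psi_pos a ha.le
  have h2 : (0:ℝ) < a ^ 2 := by positivity
  apply div_pos (by linarith) h2

lemma hasDerivAt_Tfun {δ : ℝ} {a : ℝ} (ha : 0 < a) :
    HasDerivAt (Tfun δ) (-((8 * Qfun a + 2 * Tfun δ a) / a)) a := by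
  have ha' : a ≠ 0 := ha.ne'
  have hnum : HasDerivAt (fun x : ℝ => 4 * (δ - 1 / 2) + 4 * psi x)
      (4 * -(2 * a * Qfun a)) a := ((hasDerivAt_psi a).const_mul 4).const_add _
  have hden : HasDerivAt (fun x : ℝ => x ^ 2) (2 * a) a := by
    simpa using hasDerivAt_pow 2 a
  have h := hnum.div hden (by positivity)
  refine (h.congr_of_eventuallyEq ?_).congr_deriv ?_
  · filter_upwards with x; rw [Tfun]; rfl
  · rw [Tfun]
    field_simp
    ring

lemma Tfun_strictAntiOn {δ : ℝ} (hδ : 1 / 2 < δ) :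
    StrictAntiOn (Tfun δ) (Set.Ioi 0) := by
  apply strictAntiOn_of_deriv_neg (convex_Ioi 0)
  · exact fun x hx => ((hasDerivAt_Tfun (δ := δ) hx).continuousAt).continuousWithinAt
  · intro x hx
    rw [interior_Ioi] at hx
    rw [(hasDerivAt_Tfun hx).deriv]
    have h1 := Qfun_pos x
    have h2 := Tfun_pos hδ hx
    have : 0 < (8 * Qfun x + 2 * Tfun δ x) / x :=
      div_pos (by linarith) hx
    linarith
lemma aux1 (d p a t A' : ℝ) (ha : a ≠ 0) (hz : t * a ^ 2 = 4 * d + 4 * p) :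
    (d / 2 - 0 / (2 * (2 / a) ^ 2) + p / 2) * (-2 * A' / a ^ 2) + (1 * a + t * A') / 4
      = a / 4 := by
  have hd : d = t * a ^ 2 / 4 - p := by linarith
  subst hd
  field_simp
  ring

lemma aux2 (d q p a t : ℝ) (ha : a ≠ 0)
    (hz : t * a ^ 2 = 4 * d + 4 * ((1 - a ^ 2) * q + a * p)) :
    2 / a / 2 * d + t / (2 * (2 / a)) + 2 / a / 2 * ((1 + a ^ 2) * q - a * p)
      = t * a / 2 + 2 * a * q - 2 * p := by
  have hd : d = t * a ^ 2 / 4 - ((1 - a ^ 2) * q + a * p) := by linarith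
  subst hd
  field_simp
  ring

lemma aux3 (q p a t fv : ℝ) (hden : 8 * q + 2 * t ≠ 0)
    (hfv : fv = t * a / 2 + 2 * a * q - 2 * p) :
    a / 4 * (a / 4) + fv * (-a / (8 * q + 2 * t) / 4) = a * p / (2 * (8 * q + 2 * t)) := by
  subst hfv
  have h := inv_mul_cancel₀ hden
  rw [mul_comm 2 (8 * q + 2 * t), ← div_div]
  linear_combination (-(a^2/16)) * h
set_option maxHeartbeats 2000000 in
theorem R_second_deriv_bound (δ : ℝ) (hδ : 1 / 2 < δ) (τmin f R : ℝ → ℝ)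
    (hτ : ∀ t : ℝ, 0 < t → τmin t ∈ Set.Ioi (0 : ℝ) ∧
      IsMinOn (Fobj δ t) (Set.Ioi (0 : ℝ)) (τmin t))
    (hf : ∀ t : ℝ, 0 < t → f t = Fobj δ t (τmin t))
    (hR : ∀ t : ℝ, R t = f t ^ 2 / 2) :
    (∀ t : ℝ, 0 < t →
      deriv (deriv R) t
        ≤ Real.sqrt (δ / (8 * Real.pi)) * Real.exp (-(2 * (δ - 1 / 2)) / t)
            * t ^ (-(3 : ℝ) / 2)) ∧
    ∃ C : ℝ, ∀ t : ℝ, 0 < t → deriv (deriv R) t ≤ C := by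
  obtain ⟨A, hAdef⟩ : ∃ A : ℝ → ℝ, ∀ t, A t = 2 / τmin t := ⟨_, fun _ => rfl⟩
  have hτpos : ∀ t : ℝ, 0 < t → 0 < τmin t := fun t ht => (hτ t ht).1
  have hApos : ∀ t : ℝ, 0 < t → 0 < A t := fun t ht => by
    rw [hAdef t]
    exact div_pos (by norm_num) (hτpos t ht)
  have hτmA : ∀ t : ℝ, 0 < t → τmin t = 2 / A t := fun t ht => by
    rw [hAdef t, div_div_cancel₀ (by norm_num : (2:ℝ) ≠ 0)]
  -- first order condition
  have hzero : ∀ t : ℝ, 0 < t →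
      (δ - 1 / 2) / 2 - t / (2 * (τmin t) ^ 2) + psi (A t) / 2 = 0 := by
    intro t ht
    have hloc : IsLocalMin (Fobj δ t) (τmin t) :=
      (hτ t ht).2.isLocalMin (Ioi_mem_nhds (hτ t ht).1)
    have h0 := hloc.hasDerivAt_eq_zero (hasDerivAt_Fobj_tau δ t (τmin t) (hτpos t ht))
    rw [hAdef t]
    exact h0
  -- `t * (A t)^2 = 4 (δ - 1/2) + 4 ψ (A t)`
  have hta : ∀ t : ℝ, 0 < t → t * (A t) ^ 2 = 4 * (δ - 1 / 2) + 4 * psi (A t) := by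
    intro t ht
    have hz := hzero t ht
    have hτ0 : τmin t ≠ 0 := (hτpos t ht).ne'
    rw [hAdef t] at hz ⊢
    field_simp at hz ⊢
    nlinarith [hz, sq_nonneg (τmin t)]
  have hfoc : ∀ t : ℝ, 0 < t → Tfun δ (A t) = t := by
    intro t ht
    have h := hta t ht
    have ha := hApos t ht
    rw [Tfun, div_eq_iff (by positivity : (A t)^2 ≠ 0)]
    linarith [h]
  have hanti := Tfun_strictAntiOn (δ := δ) hδ
  have hAcont : ∀ t₀ : ℝ, 0 < t₀ → ContinuousAt A t₀ := by
    intro t₀ ht₀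
    have ha₀ := hApos t₀ ht₀
    rw [ContinuousAt]
    apply tendsto_order.2
    constructor
    · intro b hb
      set b' := max b (A t₀ / 2) with hb'def
      have hb'pos : 0 < b' := lt_of_lt_of_le (by linarith) (le_max_right _ _)
      have hb'lt : b' < A t₀ := max_lt hb (by linarith)
      have hT : t₀ < Tfun δ b' := by
        have := hanti (Set.mem_Ioi.2 hb'pos) (Set.mem_Ioi.2 ha₀) hb'lt
        rwa [hfoc t₀ ht₀] at this
      filter_upwards [Ioo_mem_nhds ht₀ hT] with s hs
      by_contra hcon
      push_neg at hcon
      have hAs := hApos s hs.1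
      have hle : A s ≤ b' := le_trans hcon (le_max_left _ _)
      have : Tfun δ b' ≤ Tfun δ (A s) :=
        hanti.antitoneOn (Set.mem_Ioi.2 hAs) (Set.mem_Ioi.2 hb'pos) hle
      rw [hfoc s hs.1] at this
      exact absurd hs.2 (not_lt.2 this)
    · intro b hb
      have hbpos : 0 < b := lt_trans ha₀ hb
      have hT : Tfun δ b < t₀ := by
        have := hanti (Set.mem_Ioi.2 ha₀) (Set.mem_Ioi.2 hbpos) hb
        rwa [hfoc t₀ ht₀] at this
      have hTpos : 0 < Tfun δ b := Tfun_pos hδ hbpos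
      filter_upwards [Ioi_mem_nhds hT] with s hs
      have hspos : 0 < s := lt_trans hTpos hs
      by_contra hcon
      push_neg at hcon
      have : Tfun δ (A s) ≤ Tfun δ b :=
        hanti.antitoneOn (Set.mem_Ioi.2 hbpos) (Set.mem_Ioi.2 (hApos s hspos)) hcon
      rw [hfoc s hspos] at this
      exact absurd hs (not_lt.2 this)
  -- derivative of A via local inverse
  have hAderiv : ∀ t : ℝ, 0 < t →
      HasDerivAt A (-(A t) / (8 * Qfun (A t) + 2 * t)) t := by
    intro t ht
    have ha := hApos t ht
    have hq := Qfun_pos (A t)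
    have hfT : HasDerivAt (Tfun δ) (-((8 * Qfun (A t) + 2 * t) / A t)) (A t) := by
      have := hasDerivAt_Tfun (δ := δ) ha
      rwa [hfoc t ht] at this
    have hne : -((8 * Qfun (A t) + 2 * t) / A t) ≠ 0 := by
      have : 0 < (8 * Qfun (A t) + 2 * t) / A t := div_pos (by linarith) ha
      linarith
    have hev : ∀ᶠ y in nhds t, Tfun δ (A y) = y := by
      filter_upwards [Ioi_mem_nhds ht] with y hy using hfoc y hy
    have h := HasDerivAt.of_local_left_inverse (hAcont t ht) hfT hne hev
    refine h.congr_deriv ?_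
    rw [← one_div, div_neg, one_div_div, neg_div]
  -- derivative of f
  have hfd : ∀ t : ℝ, 0 < t → HasDerivAt f (A t / 4) t := by
    intro t ht
    have ha := hApos t ht
    have haz : A t ≠ 0 := ha.ne'
    have hAd := hAderiv t ht
    set A' := -(A t) / (8 * Qfun (A t) + 2 * t) with hA'def
    have hfg : ∀ᶠ s in nhds t, f s = Fobj δ 0 (2 / A s) + s * A s / 4 := by
      filter_upwards [Ioi_mem_nhds ht] with s hs
      rw [hf s hs, hτmA s hs, Fobj_eq, Fobj_eq]
      have hAs : A s ≠ 0 := (hApos s hs).ne'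
      field_simp
      ring
    have h2A : HasDerivAt (fun s => 2 / A s) (-2 * A' / (A t) ^ 2) t := by
      have h := (hAd.inv haz).const_mul 2
      refine (h.congr_of_eventuallyEq ?_).congr_deriv ?_
      · filter_upwards with s; rw [div_eq_mul_inv]; rfl
      · ring
    have hC := hasDerivAt_Fobj_tau δ 0 (2 / A t) (by positivity)
    have hcomp := hC.comp t h2A
    have hprod : HasDerivAt (fun s => s * A s / 4) ((1 * A t + t * A') / 4) t :=
      ((hasDerivAt_id t).mul hAd).div_const 4
    have htot := hcomp.add hprod
    refine ((htot.congr_of_eventuallyEq hfg).congr_deriv ?_)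
    show ((δ - 1 / 2) / 2 - 0 / (2 * (2 / A t) ^ 2) + psi (2 / (2 / A t)) / 2)
        * (-2 * A' / (A t) ^ 2) + (1 * A t + t * A') / 4 = A t / 4
    rw [div_div_cancel₀ (by norm_num : (2:ℝ) ≠ 0)]
    exact aux1 (δ - 1/2) (psi (A t)) (A t) t A' haz (hta t ht)
  -- value of f
  have hfval : ∀ t : ℝ, 0 < t →
      f t = t * A t / 2 + 2 * A t * Qfun (A t) - 2 * stdPDF (A t) := by
    intro t ht
    have ha := hApos t ht
    have haz : A t ≠ 0 := ha.ne'
    rw [hf t ht, hτmA t ht, Fobj_eq, div_div_cancel₀ (by norm_num : (2:ℝ) ≠ 0)]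
    have hz := hta t ht
    unfold psi at hz
    unfold Jfun
    exact aux2 (δ - 1/2) (Qfun (A t)) (stdPDF (A t)) (A t) t haz hz
  -- first derivative of R
  have hRd : ∀ t : ℝ, 0 < t → HasDerivAt R (f t * (A t / 4)) t := by
    intro t ht
    have h := ((hfd t ht).pow 2).div_const 2
    have hReq : R = fun s => f s ^ 2 / 2 := funext hR
    rw [hReq]
    refine h.congr_deriv ?_
    push_cast
    ring
  have hderivR : ∀ t : ℝ, 0 < t → deriv R t = f t * (A t / 4) := fun t ht => (hRd t ht).deriv
  -- second derivative of R
  have hderiv2 : ∀ t : ℝ, 0 < t →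
      deriv (deriv R) t
        = A t / 4 * (A t / 4) + f t * (-(A t) / (8 * Qfun (A t) + 2 * t) / 4) := by
    intro t ht
    have hev : deriv R =ᶠ[nhds t] fun s => f s * (A s / 4) := by
      filter_upwards [Ioi_mem_nhds ht] with s hs using hderivR s hs
    rw [hev.deriv_eq]
    have h2 : HasDerivAt (fun s => f s * (A s / 4))
        (A t / 4 * (A t / 4) + f t * (-(A t) / (8 * Qfun (A t) + 2 * t) / 4)) t :=
      (hfd t ht).mul ((hAderiv t ht).div_const 4)
    exact h2.deriv
  -- main pointwise bound
  have key : ∀ t : ℝ, 0 < t →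
      deriv (deriv R) t ≤ Real.sqrt (δ / (8 * Real.pi)) * Real.exp (-(2 * (δ - 1 / 2)) / t)
        * t ^ (-(3:ℝ)/2) := by
    intro t ht
    have ha := hApos t ht
    have hq := Qfun_pos (A t)
    have hp := stdPDF_pos (A t)
    have hdenpos : 0 < 8 * Qfun (A t) + 2 * t := by linarith
    have hform : deriv (deriv R) t
        = A t * stdPDF (A t) / (2 * (8 * Qfun (A t) + 2 * t)) := by
      rw [hderiv2 t ht]
      exact aux3 (Qfun (A t)) (stdPDF (A t)) (A t) t (f t) hdenpos.ne' (hfval t ht)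
    have h1 : deriv (deriv R) t ≤ A t * stdPDF (A t) / (4 * t) := by
      rw [hform]
      refine (div_le_div_iff_of_pos_left (mul_pos ha hp) (by linarith) (by linarith)).2 (by linarith)
    have hbl : 4 * (δ - 1 / 2) ≤ t * (A t) ^ 2 := by
      rw [hta t ht]; have := psi_pos (A t) ha.le; linarith
    have hbu : t * (A t) ^ 2 ≤ 4 * δ := by
      rw [hta t ht]; have := psi_le_half (A t) ha.le; linarith
    have ha_up : A t ≤ 2 * Real.sqrt δ / Real.sqrt t := by
      have h4 : (A t) ^ 2 ≤ 4 * δ / t := by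
        rw [le_div_iff₀ ht]; nlinarith
      have h5 : A t ≤ Real.sqrt (4 * δ / t) := by
        rw [show A t = Real.sqrt ((A t) ^ 2) from (Real.sqrt_sq ha.le).symm]
        exact Real.sqrt_le_sqrt h4
      refine le_trans h5 (le_of_eq ?_)
      rw [Real.sqrt_div (by positivity : (0:ℝ) ≤ 4 * δ),
        show (4:ℝ) * δ = 2 ^ 2 * δ by norm_num,
        Real.sqrt_mul (by positivity : (0:ℝ) ≤ (2:ℝ) ^ 2),
        Real.sqrt_sq (by norm_num : (0:ℝ) ≤ 2)]
    have hp_up : stdPDF (A t) ≤ Real.exp (-(2 * (δ - 1 / 2)) / t) / Real.sqrt (2 * Real.pi) := by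
      rw [stdPDF_eq]
      have h2ppos : (0:ℝ) < Real.sqrt (2 * Real.pi) := by
        have := Real.pi_pos; positivity
      refine (div_le_div_iff_of_pos_right h2ppos).2 (Real.exp_le_exp.2 ?_)
      have hineq : 2 * (δ - 1 / 2) / t ≤ 1 / 2 * (A t) ^ 2 := by
        rw [div_le_iff₀ ht]; nlinarith
      calc -(1/2) * (A t) ^ 2 ≤ -(2 * (δ - 1 / 2) / t) := by linarith
        _ = -(2 * (δ - 1 / 2)) / t := by ring
    have h2 : A t * stdPDF (A t) / (4 * t)
        ≤ (2 * Real.sqrt δ / Real.sqrt t)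
          * (Real.exp (-(2 * (δ - 1 / 2)) / t) / Real.sqrt (2 * Real.pi)) / (4 * t) := by
      gcongr
    have h3 : (2 * Real.sqrt δ / Real.sqrt t)
          * (Real.exp (-(2 * (δ - 1 / 2)) / t) / Real.sqrt (2 * Real.pi)) / (4 * t)
        = Real.sqrt (δ / (8 * Real.pi)) * Real.exp (-(2 * (δ - 1 / 2)) / t)
          * t ^ (-(3:ℝ)/2) := by
      have hst : Real.sqrt t ≠ 0 := by positivity
      have h2π : Real.sqrt (2 * Real.pi) ≠ 0 := by
        have := Real.pi_pos; positivity
      have hrw : Real.sqrt (δ / (8 * Real.pi))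
          = Real.sqrt δ / (2 * Real.sqrt (2 * Real.pi)) := by
        rw [show δ / (8 * Real.pi) = δ / (2 ^ 2 * (2 * Real.pi)) by ring,
          Real.sqrt_div (by linarith : (0:ℝ) ≤ δ),
          Real.sqrt_mul (by positivity : (0:ℝ) ≤ (2:ℝ) ^ 2),
          Real.sqrt_sq (by norm_num : (0:ℝ) ≤ 2)]
      have hrpow : t ^ (-(3:ℝ)/2) = 1 / (t * Real.sqrt t) := by
        rw [show (-(3:ℝ)/2) = -((1:ℝ) + 1/2) by norm_num, Real.rpow_neg ht.le,
          Real.rpow_add ht, Real.rpow_one, ← Real.sqrt_eq_rpow, one_div]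
      rw [hrw, hrpow]
      have htne : t ≠ 0 := ht.ne'
      field_simp
      ring
    calc deriv (deriv R) t ≤ A t * stdPDF (A t) / (4 * t) := h1
      _ ≤ _ := h2
      _ = _ := h3
  refine ⟨key, ?_⟩
  -- boundedness
  have hc : 0 < 2 * (δ - 1 / 2) := by linarith
  set c : ℝ := 2 * (δ - 1 / 2) with hcdef
  refine ⟨Real.sqrt (δ / (8 * Real.pi)) * (1 + 4 / c ^ 2), ?_⟩
  intro t ht
  refine le_trans (key t ht) ?_
  have hE : Real.exp (-c / t) * t ^ (-(3:ℝ)/2) ≤ 1 + 4 / c ^ 2 := by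
    have h4c : (0:ℝ) ≤ 4 / c ^ 2 := by positivity
    rcases le_or_gt 1 t with h1 | h1
    · have he : Real.exp (-c / t) ≤ 1 := by
        rw [Real.exp_le_one_iff]
        apply div_nonpos_of_nonpos_of_nonneg (by linarith) ht.le
      have hr : t ^ (-(3:ℝ)/2) ≤ 1 :=
        Real.rpow_le_one_of_one_le_of_nonpos h1 (by norm_num)
      have h0 : (0:ℝ) ≤ t ^ (-(3:ℝ)/2) := Real.rpow_nonneg ht.le _
      nlinarith [Real.exp_pos (-c / t)]
    · have hsq : (c / t) ^ 2 / 4 ≤ Real.exp (c / t) := by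
        have h := Real.add_one_le_exp (c / t / 2)
        have hpos : (0:ℝ) ≤ c / t / 2 := by positivity
        have hmul : Real.exp (c / t / 2) * Real.exp (c / t / 2) = Real.exp (c / t) := by
          rw [← Real.exp_add]; ring_nf
        nlinarith [h, hpos, Real.exp_pos (c / t / 2)]
      have he : Real.exp (-c / t) ≤ 4 * t ^ 2 / c ^ 2 := by
        rw [show -c / t = -(c / t) by ring, Real.exp_neg]
        have h5 : c ^ 2 / (4 * t ^ 2) ≤ Real.exp (c / t) := by
          refine le_trans (le_of_eq ?_) hsq
          field_simp
        have h6 : (0:ℝ) < c ^ 2 / (4 * t ^ 2) := by positivity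
        calc (Real.exp (c / t))⁻¹ ≤ (c ^ 2 / (4 * t ^ 2))⁻¹ := by
              apply inv_anti₀ h6 h5
          _ = 4 * t ^ 2 / c ^ 2 := by rw [inv_div]
      have hr : t ^ 2 * t ^ (-(3:ℝ)/2) = t ^ ((1:ℝ)/2) := by
        rw [show (t:ℝ) ^ 2 = t ^ ((2:ℕ):ℝ) from (Real.rpow_natCast t 2).symm,
          ← Real.rpow_add ht]
        norm_num
      have hr2 : t ^ ((1:ℝ)/2) ≤ 1 := Real.rpow_le_one ht.le h1.le (by norm_num)
      have h0 : (0:ℝ) ≤ t ^ (-(3:ℝ)/2) := Real.rpow_nonneg ht.le _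
      calc Real.exp (-c / t) * t ^ (-(3:ℝ)/2)
          ≤ 4 * t ^ 2 / c ^ 2 * t ^ (-(3:ℝ)/2) := mul_le_mul_of_nonneg_right he h0
        _ = 4 / c ^ 2 * (t ^ 2 * t ^ (-(3:ℝ)/2)) := by ring
        _ = 4 / c ^ 2 * t ^ ((1:ℝ)/2) := by rw [hr]
        _ ≤ 4 / c ^ 2 * 1 := mul_le_mul_of_nonneg_left hr2 (by positivity)
        _ ≤ 1 + 4 / c ^ 2 := by linarith
  have hs : (0:ℝ) ≤ Real.sqrt (δ / (8 * Real.pi)) := Real.sqrt_nonneg _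
  calc Real.sqrt (δ / (8 * Real.pi)) * Real.exp (-(2 * (δ - 1 / 2)) / t) * t ^ (-(3:ℝ)/2)
      = Real.sqrt (δ / (8 * Real.pi)) * (Real.exp (-c / t) * t ^ (-(3:ℝ)/2)) := by
        rw [hcdef]; ring
    _ ≤ Real.sqrt (δ / (8 * Real.pi)) * (1 + 4 / c ^ 2) := mul_le_mul_of_nonneg_left hE hs
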